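/- (Directional quadrature relation for the anti-diagonal complex wavelet Ψ₆, oriented along θ = 3π/4.) Let ψ, ψ' : ℝ → ℂ be integrable functions with 𝓕ψ'(ξ) = −i·sign(ξ)·𝓕ψ(ξ) for all ξ ∈ ℝ. Define on ℝ² the functions A(x, y) = (ψ(x)ψ(y) + ψ'(x)ψ'(y))/√2 and B(x, y) = (ψ(x)ψ'(y) − ψ'(x)ψ(y))/√2. Then for every ω = (ω₁, ω₂) ∈ ℝ², 𝓕B(ω) = −i·sign(ω₂ − ω₁)·𝓕A(ω); that is, B is the directional Hilbert transform of A along the anti-diagonal direction u = (−1/√2, 1/√2), so Ψ₆ = A + iB is a direction-selective complex wavelet oriented along θ₆ = 3π/4. -/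

import Mathlib

open MeasureTheory
open scoped FourierTransform Real RealInnerProductSpace

lemma sign_sub_sign (a b : ℝ) :
    Real.sign b - Real.sign a = Real.sign (b - a) * (1 - Real.sign a * Real.sign b) := by
  rcases lt_trichotomy a 0 with ha|ha|ha <;> rcases lt_trichotomy b 0 with hb|hb|hb
  · rw [Real.sign_of_neg ha, Real.sign_of_neg hb]; ring
  · rw [Real.sign_of_neg ha, hb, Real.sign_zero,
      Real.sign_of_pos (by linarith : (0:ℝ) < 0 - a)]; ring
  · rw [Real.sign_of_neg ha, Real.sign_of_pos hb,
      Real.sign_of_pos (by linarith : (0:ℝ) < b - a)]; ring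
  · rw [ha, Real.sign_zero, Real.sign_of_neg hb,
      Real.sign_of_neg (by linarith : b - 0 < 0)]; ring
  · rw [ha, hb]; simp
  · rw [ha, Real.sign_zero, Real.sign_of_pos hb,
      Real.sign_of_pos (by linarith : (0:ℝ) < b - 0)]; ring
  · rw [Real.sign_of_pos ha, Real.sign_of_neg hb,
      Real.sign_of_neg (by linarith : b - a < 0)]; ring
  · rw [Real.sign_of_pos ha, hb, Real.sign_zero,
      Real.sign_of_neg (by linarith : 0 - a < 0)]; ring
  · rw [Real.sign_of_pos ha, Real.sign_of_pos hb]; ring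

noncomputable def eqv2 : EuclideanSpace ℝ (Fin 2) ≃ᵐ ℝ × ℝ :=
  (MeasurableEquiv.toLp 2 (Fin 2 → ℝ)).symm.trans (MeasurableEquiv.finTwoArrow)

lemma eqv2_mp : MeasurePreserving (eqv2 : EuclideanSpace ℝ (Fin 2) → ℝ × ℝ) volume volume :=
  (volume_preserving_finTwoArrow ℝ).comp
    (EuclideanSpace.volume_preserving_symm_measurableEquiv_toLp (Fin 2))

lemma integrable_sep {a b : ℝ → ℂ} (ha : Integrable a) (hb : Integrable b) :
    Integrable (fun x : EuclideanSpace ℝ (Fin 2) => a (x 0) * b (x 1)) :=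
  (eqv2_mp.integrable_comp_emb eqv2.measurableEmbedding).mpr (ha.mul_prod hb)

lemma fourier_sep (a b : ℝ → ℂ) (ω : EuclideanSpace ℝ (Fin 2)) :
    𝓕 (fun x : EuclideanSpace ℝ (Fin 2) => a (x 0) * b (x 1)) ω
      = 𝓕 a (ω 0) * 𝓕 b (ω 1) := by
  rw [Real.fourier_eq,
    ← (MeasurePreserving.symm eqv2 eqv2_mp).integral_comp eqv2.symm.measurableEmbedding _,
    Real.fourier_real_eq, Real.fourier_real_eq, ← integral_prod_mul]
  congr 1 with p
  have h0 : (eqv2.symm p : EuclideanSpace ℝ (Fin 2)) 0 = p.1 := rfl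
  have h1 : (eqv2.symm p : EuclideanSpace ℝ (Fin 2)) 1 = p.2 := rfl
  have hinner : ⟪(eqv2.symm p : EuclideanSpace ℝ (Fin 2)), ω⟫ = p.1 * ω 0 + p.2 * ω 1 := by
    simp [PiLp.inner_apply, Fin.sum_univ_two, h0, h1, RCLike.inner_apply, mul_comm]
  simp only [h0, h1, hinner, neg_add, AddChar.map_add_eq_mul, Circle.smul_def, Circle.coe_mul,
    smul_eq_mul]
  ring

lemma fourier_sub_div {f g : EuclideanSpace ℝ (Fin 2) → ℂ}
    (hf : Integrable f) (hg : Integrable g) (c : ℂ) (ω : EuclideanSpace ℝ (Fin 2)) :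
    𝓕 (fun x => (f x - g x) / c) ω = (𝓕 f ω - 𝓕 g ω) / c := by
  simp only [Real.fourier_eq, div_eq_mul_inv, smul_sub, sub_mul, ← smul_mul_assoc]
  rw [integral_sub (((Real.fourierIntegral_convergent_iff ω).2 hf).mul_const _)
    (((Real.fourierIntegral_convergent_iff ω).2 hg).mul_const _),
    integral_mul_const, integral_mul_const]

lemma fourier_add_div {f g : EuclideanSpace ℝ (Fin 2) → ℂ}
    (hf : Integrable f) (hg : Integrable g) (c : ℂ) (ω : EuclideanSpace ℝ (Fin 2)) :
    𝓕 (fun x => (f x + g x) / c) ω = (𝓕 f ω + 𝓕 g ω) / c := by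
  simp only [Real.fourier_eq, div_eq_mul_inv, smul_add, add_mul, ← smul_mul_assoc]
  rw [integral_add (((Real.fourierIntegral_convergent_iff ω).2 hf).mul_const _)
    (((Real.fourierIntegral_convergent_iff ω).2 hg).mul_const _),
    integral_mul_const, integral_mul_const]

/-- Directional quadrature relation for the anti-diagonal complex wavelet `Ψ₆`:
if `ψ' = 𝗛ψ`, then `B(x,y) = (ψ(x)ψ'(y) - ψ'(x)ψ(y))/√2` is the directional Hilbert
transform of `A(x,y) = (ψ(x)ψ(y) + ψ'(x)ψ'(y))/√2` along the anti-diagonal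
`u = (-1/√2, 1/√2)`. -/
theorem directional_quadrature_antidiagonal
    (ψ ψ' : ℝ → ℂ) (hψ : Integrable ψ) (hψ' : Integrable ψ')
    (hH : ∀ ξ : ℝ, 𝓕 ψ' ξ = -Complex.I * (Real.sign ξ : ℂ) * 𝓕 ψ ξ) :
    ∀ ω : EuclideanSpace ℝ (Fin 2),
      𝓕 (fun x : EuclideanSpace ℝ (Fin 2) =>
          (ψ (x 0) * ψ' (x 1) - ψ' (x 0) * ψ (x 1)) / (Real.sqrt 2 : ℂ)) ω =
        -Complex.I * (Real.sign (ω 1 - ω 0) : ℂ) *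
          𝓕 (fun x : EuclideanSpace ℝ (Fin 2) =>
              (ψ (x 0) * ψ (x 1) + ψ' (x 0) * ψ' (x 1)) / (Real.sqrt 2 : ℂ)) ω := by
  intro ω
  rw [fourier_sub_div (integrable_sep hψ hψ') (integrable_sep hψ' hψ),
    fourier_add_div (integrable_sep hψ hψ) (integrable_sep hψ' hψ'),
    fourier_sep, fourier_sep, fourier_sep, fourier_sep, hH (ω 0), hH (ω 1)]
  have h : ((Real.sign (ω 1) : ℂ) - (Real.sign (ω 0) : ℂ)) =
      (Real.sign (ω 1 - ω 0) : ℂ) * (1 - (Real.sign (ω 0) : ℂ) * (Real.sign (ω 1) : ℂ)) := by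
    exact_mod_cast sign_sub_sign (ω 0) (ω 1)
  have hI : Complex.I * Complex.I = -1 := Complex.I_mul_I
  set P0 := 𝓕 ψ (ω 0)
  set P1 := 𝓕 ψ (ω 1)
  set s0 : ℂ := (Real.sign (ω 0) : ℂ)
  set s1 : ℂ := (Real.sign (ω 1) : ℂ)
  set s : ℂ := (Real.sign (ω 1 - ω 0) : ℂ)
  linear_combination (-Complex.I * P0 * P1 / (Real.sqrt 2 : ℂ)) * h +
    (Complex.I * P0 * P1 * s * s0 * s1 / (Real.sqrt 2 : ℂ)) * hI
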